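/- For every integer n ≥ 1 the following identity holds in the polynomial ring ℚ[x]: the determinant of the n×n matrix with entries binom(x+i+j, i-j+1) for 0 ≤ j ≤ i+1 and 0 for j > i+1, 0 ≤ i, j ≤ n-1, equals (x/n!)·∏_{j=n+1}^{2n-1} (x+j). -/

import Mathlib

open Polynomial

/-- The polynomial binomial coefficient `binom(y, r) = (1/r!)·∏_{ℓ=0}^{r-1} (y - ℓ)`. -/
noncomputable def polyChoose (y : Polynomial ℚ) (r : ℕ) : Polynomial ℚ :=
  Polynomial.C ((r.factorial : ℚ)⁻¹) * ∏ ℓ ∈ Finset.range r, (y - Polynomial.C (ℓ : ℚ))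

/- ### Auxiliary definitions -/

/-- `pl a b = ∏_{l ∈ [a, b)} (X + l)` in `ℚ[x]`. -/
noncomputable def pl (a b : ℕ) : Polynomial ℚ :=
  ∏ l ∈ Finset.Ico a b, (Polynomial.X + Polynomial.C (l : ℚ))

/-- The entry function of the matrix, on naturals. -/
noncomputable def ent (i j : ℕ) : Polynomial ℚ :=
  if j ≤ i + 1 then
    polyChoose (Polynomial.X + Polynomial.C ((i + j : ℕ) : ℚ)) (i + 1 - j)
  else 0

/-- The `n × n` matrix. -/
noncomputable def Mm (n : ℕ) : Matrix (Fin n) (Fin n) (Polynomial ℚ) :=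
  Matrix.of fun i j => ent i j

/-- The claimed determinant value. -/
noncomputable def Cp (n : ℕ) : Polynomial ℚ :=
  if n = 0 then 1 else
    Polynomial.X * Polynomial.C ((n.factorial : ℚ)⁻¹) * pl (n + 1) (2 * n)

/- ### Basic lemmas about `pl` -/

lemma pl_self (a : ℕ) : pl a a = 1 := by simp [pl]

lemma pl_split {a b c : ℕ} (h1 : a ≤ b) (h2 : b ≤ c) : pl a b * pl b c = pl a c :=
  Finset.prod_Ico_consecutive _ h1 h2

lemma pl_succ_top {a b : ℕ} (h : a ≤ b) :
    pl a (b + 1) = pl a b * (Polynomial.X + Polynomial.C ((b : ℕ) : ℚ)) :=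
  Finset.prod_Ico_succ_top h _

lemma pl_succ_bot {a b : ℕ} (h : a < b) :
    pl a b = (Polynomial.X + Polynomial.C ((a : ℕ) : ℚ)) * pl (a + 1) b :=
  Finset.prod_eq_prod_Ico_succ_bot h _

/- ### polyChoose lemmas -/

lemma polyChoose_zero (y : Polynomial ℚ) : polyChoose y 0 = 1 := by
  simp [polyChoose]

lemma polyChoose_eq (c r : ℕ) (h : r ≤ c + 1) :
    polyChoose (Polynomial.X + Polynomial.C (c : ℚ)) r
      = Polynomial.C ((r.factorial : ℚ)⁻¹) * pl (c + 1 - r) (c + 1) := by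
  unfold polyChoose pl
  congr 1
  refine Finset.prod_nbij' (fun ℓ => c - ℓ) (fun l => c - l) ?_ ?_ ?_ ?_ ?_
  · intro ℓ hℓ
    simp only [Finset.mem_range] at hℓ
    simp only [Finset.mem_Ico]
    omega
  · intro l hl
    simp only [Finset.mem_Ico] at hl
    simp only [Finset.mem_range]
    omega
  · intro ℓ hℓ
    simp only [Finset.mem_range] at hℓ
    show c - (c - ℓ) = ℓ
    omega
  · intro l hl
    simp only [Finset.mem_Ico] at hl
    show c - (c - l) = l
    omega
  · intro ℓ hℓ
    simp only [Finset.mem_range] at hℓ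
    have hlc : ℓ ≤ c := by omega
    have hc : (((c - ℓ : ℕ)) : ℚ) = (c : ℚ) - (ℓ : ℚ) := by
      push_cast [hlc]
      ring
    show Polynomial.X + Polynomial.C ((c : ℚ)) - Polynomial.C ((ℓ : ℚ))
        = Polynomial.X + Polynomial.C (((c - ℓ : ℕ)) : ℚ)
    rw [hc, map_sub]
    ring

lemma ent_eval (i j : ℕ) (h : j ≤ i + 1) :
    ent i j = Polynomial.C (((i + 1 - j).factorial : ℚ)⁻¹) * pl (2 * j) (i + j + 1) := by
  unfold ent
  rw [if_pos h, polyChoose_eq (i + j) (i + 1 - j) (by omega)]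
  congr 2
  omega

/- ### The minor lemma -/

lemma minor (j : ℕ) : ∀ n : ℕ, j ≤ n →
    (Matrix.of fun i k : Fin n =>
      ent i (if (k : ℕ) < j then (k : ℕ) else (k : ℕ) + 1)).det = (Mm j).det := by
  intro n
  induction n with
  | zero =>
    intro h
    interval_cases j
    simp [Mm]
  | succ m ih =>
    intro h
    rcases eq_or_lt_of_le h with hj | hj
    · -- j = m + 1 : all columns have (k:ℕ) < j
      subst hj
      congr 1
      ext i k
      have hk : (k : ℕ) < m + 1 := k.isLt
      simp [Mm, hk, Nat.lt_succ_iff.mp hk]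
    · -- j ≤ m : expand along last column
      have hjm : j ≤ m := by omega
      have hcol : ¬ ((m : ℕ) < j) := by omega
      rw [Matrix.det_succ_column _ (Fin.last m)]
      rw [Finset.sum_eq_single (Fin.last m)]
      · have hent : ent m (m + 1) = 1 := by
          unfold ent
          rw [if_pos (by omega), show m + 1 - (m + 1) = 0 by omega, polyChoose_zero]
        have hsub : ((Matrix.of fun i k : Fin (m+1) =>
              ent i (if (k : ℕ) < j then (k : ℕ) else (k : ℕ) + 1)).submatrix
                (Fin.last m).succAbove (Fin.last m).succAbove)
            = Matrix.of fun i k : Fin m =>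
                ent i (if (k : ℕ) < j then (k : ℕ) else (k : ℕ) + 1) := by
          ext i k
          simp [Matrix.submatrix_apply, Fin.succAbove_last, Fin.coe_castSucc]
        simp only [Matrix.of_apply, Fin.val_last, if_neg hcol, hent, hsub]
        rw [ih hjm, show m + m = 2 * m by ring, pow_mul]
        norm_num
      · intro i _ hi
        have hil : (i : ℕ) < m := by
          have h1 := i.isLt
          have h2 : (i : ℕ) ≠ m := fun hh => hi (Fin.ext (by simp [hh]))
          omega
        have hzero : ent i (m + 1) = 0 := by
          unfold ent
          rw [if_neg (by omega)]
        simp only [Matrix.of_apply, Fin.val_last, if_neg hcol, hzero, mul_zero, zero_mul]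
      · intro hmem
        exact absurd (Finset.mem_univ _) hmem

/- ### Expansion along the last row -/

lemma expand (n : ℕ) :
    (Mm (n + 1)).det
      = ∑ j : Fin (n + 1), (-1 : Polynomial ℚ) ^ (n + (j : ℕ)) * ent n j * (Mm (j : ℕ)).det := by
  rw [Matrix.det_succ_row (Mm (n + 1)) (Fin.last n)]
  refine Finset.sum_congr rfl fun j _ => ?_
  have hsub : ((Mm (n+1)).submatrix (Fin.last n).succAbove j.succAbove)
      = Matrix.of fun i k : Fin n =>
          ent i (if (k : ℕ) < (j : ℕ) then (k : ℕ) else (k : ℕ) + 1) := by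
    ext i k
    have hcolv : ((j.succAbove k : Fin (n+1)) : ℕ)
        = if (k : ℕ) < (j : ℕ) then (k : ℕ) else (k : ℕ) + 1 := by
      rcases lt_or_ge ((k : ℕ)) ((j : ℕ)) with hlt | hle
      · rw [Fin.succAbove_of_castSucc_lt _ _ (by rwa [Fin.lt_def, Fin.coe_castSucc])]
        simp [hlt]
      · rw [Fin.succAbove_of_le_castSucc _ _ (by rwa [Fin.le_def, Fin.coe_castSucc])]
        simp [Fin.val_succ, Nat.not_lt.mpr hle]
    simp only [Matrix.submatrix_apply, Fin.succAbove_last, Mm, Matrix.of_apply,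
      Fin.coe_castSucc, hcolv]
  rw [hsub, minor (j : ℕ) n (by omega)]
  simp [Mm, Fin.val_last]

/- ### Scalar helper -/

lemma linC (α β γ a b c : ℚ) (h1 : α + β = γ) (h2 : α * a + β * b = γ * c) :
    Polynomial.C α * (Polynomial.X + Polynomial.C a)
      + Polynomial.C β * (Polynomial.X + Polynomial.C b)
      = Polynomial.C γ * (Polynomial.X + Polynomial.C c) := by
  calc Polynomial.C α * (Polynomial.X + Polynomial.C a)
        + Polynomial.C β * (Polynomial.X + Polynomial.C b)
      = Polynomial.C (α + β) * Polynomial.X + Polynomial.C (α * a + β * b) := by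
        simp only [Polynomial.C_add, Polynomial.C_mul]; ring
    _ = Polynomial.C γ * Polynomial.X + Polynomial.C (γ * c) := by rw [h1, h2]
    _ = Polynomial.C γ * (Polynomial.X + Polynomial.C c) := by
        simp only [Polynomial.C_mul]; ring

/- ### The partial sum (telescoping) lemma -/

/-- Closed form for the partial sums. -/
noncomputable def Tm (N m : ℕ) : Polynomial ℚ :=
  (-1) ^ (N - m)
    * Polynomial.C ((((m - 1).factorial : ℚ) * ((N - m).factorial : ℚ) * ((N : ℕ) : ℚ))⁻¹)
    * Polynomial.X * pl m N * pl (N + 1) (N + m)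

lemma partial_sum (N : ℕ) (hN : 1 ≤ N) : ∀ m : ℕ, 1 ≤ m → m ≤ N →
    (∑ j ∈ Finset.range m,
        (-1 : Polynomial ℚ) ^ (N - 1 + j) * ent (N - 1) j * Cp j) = Tm N m := by
  intro m
  induction m with
  | zero => omega
  | succ m ih =>
    intro _ hmN
    rcases Nat.eq_zero_or_pos m with hm0 | hm1
    · -- base case m + 1 = 1
      subst hm0
      rw [Finset.sum_range_one]
      have hC0 : Cp 0 = 1 := by simp [Cp]
      have he : ent (N - 1) 0 = Polynomial.C ((N.factorial : ℚ)⁻¹) * pl 0 N := by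
        rw [ent_eval (N - 1) 0 (by omega), show N - 1 + 1 - 0 = N by omega,
          show 2 * 0 = 0 by rfl, show N - 1 + 0 + 1 = N by omega]
      rw [hC0, he]
      unfold Tm
      have h0N : pl 0 N = Polynomial.X * pl 1 N := by
        rw [pl_succ_bot (by omega : 0 < N)]
        norm_num
      rw [h0N]
      have hNfac : ((((1:ℕ) - 1).factorial : ℚ) * ((N - 1).factorial : ℚ) * ((N : ℕ) : ℚ))⁻¹
          = (N.factorial : ℚ)⁻¹ := by
        congr 1
        have hf : N.factorial = N * (N - 1).factorial := by
          conv_lhs => rw [show N = (N - 1) + 1 by omega]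
          rw [Nat.factorial_succ]
          congr 2
          omega
        rw [hf]
        push_cast
        norm_num [Nat.factorial]
        ring
      rw [hNfac, pl_self]
      ring_nf
    · -- inductive step: m ≥ 1, m + 1 ≤ N
      obtain ⟨p, rfl⟩ : ∃ p, m = p + 1 := ⟨m - 1, by omega⟩
      obtain ⟨q, rfl⟩ : ∃ q, N = p + q + 2 := ⟨N - p - 2, by omega⟩
      rw [Finset.sum_range_succ, ih (by omega) (by omega)]
      have hsign : (-1 : Polynomial ℚ) ^ (p + q + 2 - 1 + (p + 1)) = (-1) ^ q := by
        rw [show p + q + 2 - 1 + (p + 1) = 2 * (p + 1) + q by omega, pow_add, pow_mul]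
        norm_num
      have hent : ent (p + q + 2 - 1) (p + 1)
          = Polynomial.C (((q + 1).factorial : ℚ)⁻¹) * pl (2 * p + 2) (2 * p + q + 3) := by
        rw [show p + q + 2 - 1 = p + q + 1 by omega, ent_eval (p + q + 1) (p + 1) (by omega),
          show p + q + 1 + 1 - (p + 1) = q + 1 by omega, show 2 * (p + 1) = 2 * p + 2 by ring,
          show p + q + 1 + (p + 1) + 1 = 2 * p + q + 3 by omega]
      have hCp : Cp (p + 1)
          = Polynomial.X * Polynomial.C (((p + 1).factorial : ℚ)⁻¹) * pl (p + 2) (2 * p + 2) := by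
        unfold Cp
        rw [if_neg (by omega), show p + 1 + 1 = p + 2 by rfl,
          show 2 * (p + 1) = 2 * p + 2 by ring]
      rw [hsign, hent, hCp]
      unfold Tm
      rw [show p + q + 2 - (p + 1) = q + 1 by omega, show p + 1 - 1 = p by omega,
        show p + q + 2 - (p + 2) = q by omega, show p + 2 - 1 = p + 1 by omega]
      have hd1 : pl (p + 1) (p + q + 2)
          = (Polynomial.X + Polynomial.C (((p + 1 : ℕ)) : ℚ)) * pl (p + 2) (p + q + 2) := by
        exact pl_succ_bot (by omega)
      have hd3 : pl (p + q + 2 + 1) (p + q + 2 + (p + 2))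
          = pl (p + q + 2 + 1) (p + q + 2 + (p + 1))
            * (Polynomial.X + Polynomial.C (((2 * p + q + 3 : ℕ)) : ℚ)) := by
        rw [show p + q + 2 + (p + 2) = (p + q + 2 + (p + 1)) + 1 by omega,
          pl_succ_top (by omega)]
        congr 3
        push_cast
        ring
      have hd4 : pl (p + 2) (2 * p + 2) * pl (2 * p + 2) (2 * p + q + 3)
          = pl (p + 2) (p + q + 2)
            * ((Polynomial.X + Polynomial.C (((p + q + 2 : ℕ)) : ℚ))
              * pl (p + q + 2 + 1) (p + q + 2 + (p + 1))) := by
        rw [pl_split (by omega) (by omega),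
          ← pl_split (show p + 2 ≤ p + q + 2 by omega) (show p + q + 2 ≤ 2 * p + q + 3 by omega)]
        congr 1
        rw [pl_succ_bot (show p + q + 2 < 2 * p + q + 3 by omega)]
        congr 2
        omega
      have key : Polynomial.C ((((p + 1).factorial : ℚ) * ((q.factorial : ℚ))
              * (((p + q + 2 : ℕ)) : ℚ))⁻¹)
            * (Polynomial.X + Polynomial.C (((2 * p + q + 3 : ℕ)) : ℚ))
          + Polynomial.C (((p.factorial : ℚ) * (((q + 1).factorial : ℚ))
              * (((p + q + 2 : ℕ)) : ℚ))⁻¹)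
            * (Polynomial.X + Polynomial.C (((p + 1 : ℕ)) : ℚ))
          = Polynomial.C ((((q + 1).factorial : ℚ))⁻¹) * Polynomial.C ((((p + 1).factorial : ℚ))⁻¹)
            * (Polynomial.X + Polynomial.C (((p + q + 2 : ℕ)) : ℚ)) := by
        rw [← Polynomial.C_mul]
        have hp : ((p + 1).factorial : ℚ) = ((p : ℚ) + 1) * (p.factorial : ℚ) := by
          rw [Nat.factorial_succ]; push_cast; ring
        have hq : ((q + 1).factorial : ℚ) = ((q : ℚ) + 1) * (q.factorial : ℚ) := by
          rw [Nat.factorial_succ]; push_cast; ring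
        have hpf : (p.factorial : ℚ) ≠ 0 := by exact_mod_cast Nat.factorial_ne_zero _
        have hqf : (q.factorial : ℚ) ≠ 0 := by exact_mod_cast Nat.factorial_ne_zero _
        have hp1 : ((p : ℚ) + 1) ≠ 0 := by positivity
        have hq1 : ((q : ℚ) + 1) ≠ 0 := by positivity
        have hpq : ((p : ℚ) + (q : ℚ) + 2) ≠ 0 := by positivity
        refine linC _ _ _ _ _ _ ?_ ?_
        · rw [hp, hq]
          push_cast
          field_simp
          ring
        · rw [hp, hq]
          push_cast
          field_simp
          ring
      rw [hd1, hd3]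
      linear_combination
        (-((-1 : Polynomial ℚ) ^ q) * Polynomial.X * pl (p + 2) (p + q + 2)
            * pl (p + q + 2 + 1) (p + q + 2 + (p + 1))) * key
        + ((-1 : Polynomial ℚ) ^ q * Polynomial.X * Polynomial.C (((q + 1).factorial : ℚ)⁻¹)
            * Polynomial.C (((p + 1).factorial : ℚ)⁻¹)) * hd4

/- ### The determinant -/

lemma detMm : ∀ n : ℕ, (Mm n).det = Cp n := by
  intro n
  induction n using Nat.strong_induction_on with
  | _ n ih =>
    match n with
    | 0 => simp [Mm, Cp]
    | N + 1 =>
      rw [expand N]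
      have hstep : ∀ j : Fin (N + 1),
          (-1 : Polynomial ℚ) ^ (N + (j : ℕ)) * ent N j * (Mm (j : ℕ)).det
            = (-1 : Polynomial ℚ) ^ (N + 1 - 1 + (j : ℕ)) * ent (N + 1 - 1) j * Cp (j : ℕ) := by
        intro j
        rw [ih (j : ℕ) (by omega), show N + 1 - 1 = N by omega]
      rw [Finset.sum_congr rfl (fun j _ => hstep j)]
      rw [Fin.sum_univ_eq_sum_range
        (fun j => (-1 : Polynomial ℚ) ^ (N + 1 - 1 + j) * ent (N + 1 - 1) j * Cp j)]
      rw [partial_sum (N + 1) (by omega) (N + 1) (by omega) (by omega)]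
      unfold Tm Cp
      rw [if_neg (by omega), show N + 1 - (N + 1) = 0 by omega,
        show N + 1 - 1 = N by omega, pl_self]
      have hf : ((N + 1).factorial : ℚ) = ((N : ℚ) + 1) * (N.factorial : ℚ) := by
        rw [Nat.factorial_succ]; push_cast; ring
      have hsc : ((N.factorial : ℚ) * ((Nat.factorial 0 : ℕ) : ℚ) * (((N + 1 : ℕ)) : ℚ))⁻¹
          = (((N + 1).factorial : ℚ))⁻¹ := by
        congr 1
        rw [hf]
        push_cast [Nat.factorial_zero]
        ring
      rw [hsc]
      ring

theorem stmt_7 (n : ℕ) (hn : 1 ≤ n) :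
    Matrix.det (Matrix.of fun i j : Fin n =>
        if (j : ℕ) ≤ (i : ℕ) + 1 then
          polyChoose (Polynomial.X + Polynomial.C (((i : ℕ) + (j : ℕ) : ℕ) : ℚ))
            ((i : ℕ) + 1 - (j : ℕ))
        else 0)
      = Polynomial.X * Polynomial.C ((n.factorial : ℚ)⁻¹) *
          ∏ j ∈ Finset.Icc (n + 1) (2 * n - 1), (Polynomial.X + Polynomial.C (j : ℚ)) := by
  have hM : (Matrix.of fun i j : Fin n =>
      if (j : ℕ) ≤ (i : ℕ) + 1 then
        polyChoose (Polynomial.X + Polynomial.C (((i : ℕ) + (j : ℕ) : ℕ) : ℚ))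
          ((i : ℕ) + 1 - (j : ℕ))
      else 0) = Mm n := rfl
  rw [hM, detMm n]
  unfold Cp
  rw [if_neg (by omega)]
  unfold pl
  have hs : 2 * n - 1 + 1 = 2 * n := by omega
  rw [← Finset.Ico_add_one_right_eq_Icc, hs]
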